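/- Combinatorial impossibility lemma: Let M and X be jointly distributed random variables over F₂^n together with an auxiliary finitely-supported random variable C and a ±1-valued value z_out determined by C. Suppose γ ≥ 3. Then it is impossible to simultaneously have: (1) E_C[|E_{M,X|C}[(-1)^{⟨M,X⟩}·z_out]|] ≥ 2^{-γ+2}; (2) Ĥ_∞(M|C) + Ĥ_∞(X|C) ≥ n + 2γ; and (3) I(M;X|C) ≤ 2^{-2γ}. -/

import Mathlib

open Finset

/-- `pr μ A a` is the probability that the random variable `A` takes value `a`
under the finite measure `μ`. -/
noncomputable def pr {Ω α : Type*} [Fintype Ω] [DecidableEq α]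
    (μ : Ω → ℝ) (A : Ω → α) (a : α) : ℝ :=
  ∑ ω ∈ Finset.univ.filter (fun ω => A ω = a), μ ω

/-- Shannon entropy (base 2) of the random variable `A` under measure `μ`. -/
noncomputable def ent {Ω α : Type*} [Fintype Ω] [Fintype α] [DecidableEq α]
    (μ : Ω → ℝ) (A : Ω → α) : ℝ :=
  - ∑ a, pr μ A a * Real.logb 2 (pr μ A a)

/-- Mutual information `I(A;B)` (base 2). -/
noncomputable def mi {Ω α β : Type*} [Fintype Ω] [Fintype α] [Fintype β]
    [DecidableEq α] [DecidableEq β]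
    (μ : Ω → ℝ) (A : Ω → α) (B : Ω → β) : ℝ :=
  ent μ A + ent μ B - ent μ (fun ω => (A ω, B ω))

/-- Conditional mutual information `I(A;B|C)` (base 2). -/
noncomputable def cmi {Ω α β γ : Type*} [Fintype Ω] [Fintype α] [Fintype β] [Fintype γ]
    [DecidableEq α] [DecidableEq β] [DecidableEq γ]
    (μ : Ω → ℝ) (A : Ω → α) (B : Ω → β) (C : Ω → γ) : ℝ :=
  ent μ (fun ω => (A ω, C ω)) + ent μ (fun ω => (B ω, C ω))
    - ent μ (fun ω => ((A ω, B ω), C ω)) - ent μ C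

/-- Entry of the Sylvester Hadamard matrix: `(-1)^{⟨m,x⟩}`. -/
noncomputable def hadamard (n : ℕ) (m x : Fin n → ZMod 2) : ℝ :=
  if (∑ i, m i * x i) = 0 then 1 else -1

/-- Average min-entropy `Ĥ_∞(A|C) = -log₂ E_{c∼C}[max_a Pr[A=a|C=c]]`. -/
noncomputable def avgMinH {Ω α γ : Type*} [Fintype Ω] [Fintype α] [Fintype γ]
    [Nonempty α] [DecidableEq α] [DecidableEq γ]
    (μ : Ω → ℝ) (A : Ω → α) (C : Ω → γ) : ℝ :=
  - Real.logb 2 (∑ c, pr μ C c *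
      Finset.univ.sup' Finset.univ_nonempty
        (fun a => pr μ (fun ω => (A ω, C ω)) (a, c) / pr μ C c))

private lemma pr_split {Ω β : Type*} [Fintype Ω] [Fintype β] [DecidableEq β]
    (μ : Ω → ℝ) (p : Ω → Prop) [DecidablePred p] (B : Ω → β) :
    ∑ ω ∈ Finset.univ.filter p, μ ω
      = ∑ b, ∑ ω ∈ Finset.univ.filter (fun ω => p ω ∧ B ω = b), μ ω := by
  rw [← Finset.sum_fiberwise (Finset.univ.filter p) B μ]
  exact Finset.sum_congr rfl fun b _ => by rw [Finset.filter_filter]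

private lemma sum_filter_iff {Ω : Type*} [Fintype Ω] (μ : Ω → ℝ) (p q : Ω → Prop)
    [DecidablePred p] [DecidablePred q] (h : ∀ ω, p ω ↔ q ω) :
    ∑ ω ∈ Finset.univ.filter p, μ ω = ∑ ω ∈ Finset.univ.filter q, μ ω :=
  Finset.sum_congr (Finset.filter_congr (fun ω _ => h ω)) fun _ _ => rfl



private lemma hasDeriv_aux (x : ℝ) (hx : x < 1) :
    HasDerivAt (fun u : ℝ => Real.log (1 - u)) (-(1 - x)⁻¹) x := by
  have h1 : HasDerivAt (fun u : ℝ => 1 - u) (-1) x := by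
    simpa using (hasDerivAt_id x).const_sub 1
  have h2 := (Real.hasDerivAt_log (by linarith : (1:ℝ) - x ≠ 0)).comp x h1
  have h3 : (1 - x)⁻¹ * -1 = -(1 - x)⁻¹ := by ring
  rw [h3] at h2
  exact h2

private lemma L1 {u : ℝ} (h0 : 0 ≤ u) (h1 : u < 1) :
    u + u^2/2 ≤ -Real.log (1 - u) := by
  set f : ℝ → ℝ := fun u => -Real.log (1 - u) - u - u^2/2 with hf
  have key : ∀ x ∈ Set.Ico (0:ℝ) 1, HasDerivAt f ((1-x)⁻¹ - 1 - x) x := by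
    intro x hx
    have := (((hasDeriv_aux x hx.2).neg).sub (hasDerivAt_id x)).sub
      (((hasDerivAt_id x).pow 2).div_const 2)
    have e : - -(1-x)⁻¹ - 1 - (2:ℕ) * id x ^ (2-1) * 1 / 2 = (1-x)⁻¹ - 1 - x := by
      simp
    rw [e] at this
    exact this
  have mono : MonotoneOn f (Set.Ico (0:ℝ) 1) := by
    apply monotoneOn_of_deriv_nonneg (convex_Ico 0 1)
    · exact fun x hx => (key x hx).continuousAt.continuousWithinAt
    · intro x hx
      rw [interior_Ico] at hx
      exact ((key x (Set.mem_Ico.2 ⟨le_of_lt hx.1, hx.2⟩)).differentiableAt).differentiableWithinAt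
    · intro x hx
      rw [interior_Ico] at hx
      rw [(key x (Set.mem_Ico.2 ⟨le_of_lt hx.1, hx.2⟩)).deriv]
      have hx1 : (0:ℝ) < 1 - x := by linarith [hx.2]
      rw [sub_nonneg, ← sub_nonneg]
      have : (1-x)⁻¹ - (1 + x) = x^2 / (1-x) := by field_simp; ring
      have h2 : 0 ≤ x^2 / (1-x) := by positivity
      nlinarith [this]
  have := mono (Set.mem_Ico.2 ⟨le_refl 0, one_pos⟩) (Set.mem_Ico.2 ⟨h0, h1⟩) h0
  simp only [f] at this
  simp at this
  linarith

private lemma L2 {u : ℝ} (h0 : 0 ≤ u) (h1 : u < 1) :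
    u^2/2 - u ≤ (1 - u) * Real.log (1 - u) := by
  set f : ℝ → ℝ := fun u => (1 - u) * Real.log (1 - u) + u - u^2/2 with hf
  have key : ∀ x ∈ Set.Ico (0:ℝ) 1, HasDerivAt f (-Real.log (1-x) - x) x := by
    intro x hx
    have h1x : (0:ℝ) < 1 - x := by linarith [hx.2]
    have hp : HasDerivAt (fun u : ℝ => (1 - u) * Real.log (1 - u))
        ((-1) * Real.log (1-x) + (1-x) * (-(1-x)⁻¹)) x := by
      have ha : HasDerivAt (fun u : ℝ => 1 - u) (-1) x := by
        simpa using (hasDerivAt_id x).const_sub 1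
      exact ha.mul (hasDeriv_aux x hx.2)
    have := (hp.add (hasDerivAt_id x)).sub (((hasDerivAt_id x).pow 2).div_const 2)
    have e : (-1) * Real.log (1-x) + (1-x) * (-(1-x)⁻¹) + 1 - 2 * x ^ (2-1) * 1 / 2
        = -Real.log (1-x) - x := by
      rw [mul_neg, mul_inv_cancel₀ (ne_of_gt h1x)]
      ring_nf
    rw [← e]
    exact this
  have mono : MonotoneOn f (Set.Ico (0:ℝ) 1) := by
    apply monotoneOn_of_deriv_nonneg (convex_Ico 0 1)
    · exact fun x hx => (key x hx).continuousAt.continuousWithinAt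
    · intro x hx
      rw [interior_Ico] at hx
      exact ((key x (Set.mem_Ico.2 ⟨le_of_lt hx.1, hx.2⟩)).differentiableAt).differentiableWithinAt
    · intro x hx
      rw [interior_Ico] at hx
      rw [(key x (Set.mem_Ico.2 ⟨le_of_lt hx.1, hx.2⟩)).deriv]
      have hx1 : (0:ℝ) < 1 - x := by linarith [hx.2]
      have := Real.log_le_sub_one_of_pos hx1
      linarith
  have := mono (Set.mem_Ico.2 ⟨le_refl 0, one_pos⟩) (Set.mem_Ico.2 ⟨h0, h1⟩) h0
  simp only [f] at this
  simp at this
  linarith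

private lemma ptwise {x y : ℝ} (hx : 0 ≤ x) (hy : 0 ≤ y) (hxy : 0 < x → 0 < y) :
    (x - y)^2 / (2 * max x y) ≤ x * Real.log (x / y) - x + y := by
  rcases hx.eq_or_lt with h0 | hxpos
  · rw [← h0]
    rcases hy.eq_or_lt with hy0 | hypos
    · rw [← hy0]; norm_num
    · rw [max_eq_right hy, zero_mul]
      rw [div_le_iff₀ (by positivity)]
      nlinarith
  · have hypos : 0 < y := hxy hxpos
    have hlog : Real.log (x/y) = Real.log x - Real.log y :=
      Real.log_div (ne_of_gt hxpos) (ne_of_gt hypos)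
    rcases le_total y x with hle | hle
    · rw [max_eq_left hle]
      set u : ℝ := 1 - y/x with hu
      clear_value u
      have h1u : 1 - u = y/x := by rw [hu]; ring
      have hu0 : 0 ≤ u := by
        have : y/x ≤ 1 := (div_le_one hxpos).2 hle
        simp only [hu]; linarith
      have hu1 : u < 1 := by
        have : 0 < y/x := div_pos hypos hxpos
        simp only [hu]; linarith
      have hL := L1 hu0 hu1
      rw [h1u] at hL
      have hlog2 : -Real.log (y/x) = Real.log (x/y) := by
        rw [Real.log_div (ne_of_gt hypos) (ne_of_gt hxpos), hlog]; ring
      rw [hlog2] at hL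
      have hxu : x * u = x - y := by
        rw [hu, mul_sub, mul_one, mul_div_assoc', mul_div_right_comm, div_self (ne_of_gt hxpos), one_mul]
      have h3 := mul_le_mul_of_nonneg_left hL hxpos.le
      have h4 := mul_le_mul_of_nonneg_right h3 (by positivity : (0:ℝ) ≤ 2*x)
      have h2 : (x - y)^2 = (x*u)^2 := by rw [hxu]
      have h5 : x * (x*u) = x*(x-y) := by rw [hxu]
      rw [div_le_iff₀ (by positivity)]
      nlinarith [h4, h2, h5]
    · rw [max_eq_right hle]
      set u : ℝ := 1 - x/y with hu
      clear_value u
      have h1u : 1 - u = x/y := by rw [hu]; ring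
      have hu0 : 0 ≤ u := by
        have : x/y ≤ 1 := (div_le_one hypos).2 hle
        simp only [hu]; linarith
      have hu1 : u < 1 := by
        have : 0 < x/y := div_pos hxpos hypos
        simp only [hu]; linarith
      have hL := L2 hu0 hu1
      rw [h1u] at hL
      have hyu : y * u = y - x := by
        rw [hu, mul_sub, mul_one, mul_div_assoc', mul_div_right_comm, div_self (ne_of_gt hypos), one_mul]
      have h3 := mul_le_mul_of_nonneg_left hL hypos.le
      have hyx : y * (x/y * Real.log (x/y)) = x * Real.log (x/y) := by
        field_simp
      rw [hyx] at h3
      have h4 := mul_le_mul_of_nonneg_right h3 (by positivity : (0:ℝ) ≤ 2*y)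
      have h2 : (x - y)^2 = (y*u)^2 := by rw [hyu]; ring
      have h5 : y * (y*u) = y*(y-x) := by rw [hyu]
      rw [div_le_iff₀ (by positivity)]
      nlinarith [h4, h2, h5]

private lemma had_abs (n : ℕ) (m x : Fin n → ZMod 2) : |hadamard n m x| = 1 := by
  unfold hadamard; split <;> norm_num

private lemma had_mul (n : ℕ) (m x x' : Fin n → ZMod 2) :
    hadamard n m x * hadamard n m x' = hadamard n m (x + x') := by
  unfold hadamard
  have hsum : (∑ i, m i * (x + x') i) = (∑ i, m i * x i) + (∑ i, m i * x' i) := by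
    rw [← Finset.sum_add_distrib]
    exact Finset.sum_congr rfl fun i _ => by simp [mul_add]
  rw [hsum]
  have h2 : ∀ z : ZMod 2, z = 0 ∨ z = 1 := by decide
  have e11 : ((1:ZMod 2)+1) = 0 := by decide
  have e1 : ((1:ZMod 2)) ≠ 0 := by decide
  rcases h2 (∑ i, m i * x i) with h | h <;> rcases h2 (∑ i, m i * x' i) with h' | h' <;>
    rw [h, h'] <;> simp [e11, e1]

private lemma char_sum (n : ℕ) (y : Fin n → ZMod 2) (hy : y ≠ 0) :
    ∑ m : Fin n → ZMod 2, hadamard n m y = 0 := by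
  obtain ⟨i, hi⟩ : ∃ i, y i ≠ 0 := by
    by_contra h
    push_neg at h
    exact hy (funext h)
  have hyi : y i = 1 := by
    have h2 : ∀ z : ZMod 2, z = 0 ∨ z = 1 := by decide
    rcases h2 (y i) with h | h
    · exact absurd h hi
    · exact h
  apply Finset.sum_ninvolution (fun m => m + (Pi.single i 1 : Fin n → ZMod 2))
  · intro m
    have : hadamard n (m + (Pi.single i 1 : Fin n → ZMod 2)) y = - hadamard n m y := by
      unfold hadamard
      have hsum : (∑ j, (m + (Pi.single i 1 : Fin n → ZMod 2)) j * y j) = (∑ j, m j * y j) + 1 := by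
        have : ∀ j, (m + (Pi.single i 1 : Fin n → ZMod 2)) j * y j
            = m j * y j + (Pi.single i 1 : Fin n → ZMod 2) j * y j := by
          intro j; simp [add_mul]
        rw [Finset.sum_congr rfl fun j _ => this j, Finset.sum_add_distrib]
        congr 1
        rw [Finset.sum_eq_single i]
        · simp [hyi]
        · intro b _ hb; simp [Pi.single_eq_of_ne hb]
        · simp
      rw [hsum]
      have h2 : ∀ z : ZMod 2, z = 0 ∨ z = 1 := by decide
      have e11 : ((1:ZMod 2)+1) = 0 := by decide
      have e1 : ((1:ZMod 2)) ≠ 0 := by decide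
      rcases h2 (∑ j, m j * y j) with h | h <;> rw [h] <;> simp [e11, e1]
    rw [this]; ring
  · intro m _
    intro h
    have := congrFun h i
    simp at this
  · intro m; exact Finset.mem_univ _
  · intro m
    funext j
    by_cases hj : j = i
    · subst hj
      simp only [Pi.add_apply]
      rw [Pi.single_eq_same, add_assoc, show ((1:ZMod 2)+1) = 0 from by decide, add_zero]
    · simp only [Pi.add_apply]
      rw [Pi.single_eq_of_ne hj, add_zero, add_zero]

private lemma char_sum_zero (n : ℕ) :
    ∑ m : Fin n → ZMod 2, hadamard n m 0 = 2^n := by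
  have : ∀ m : Fin n → ZMod 2, hadamard n m 0 = 1 := by
    intro m; unfold hadamard; simp
  rw [Finset.sum_congr rfl fun m _ => this m, Finset.sum_const, Finset.card_univ]
  simp [Fintype.card_fun]

private lemma lindsey (n : ℕ) (f g : (Fin n → ZMod 2) → ℝ) :
    (∑ m, ∑ x, f m * g x * hadamard n m x)^2 ≤ 2^n * (∑ m, (f m)^2) * (∑ x, (g x)^2) := by
  have hstep : (∑ m, ∑ x, f m * g x * hadamard n m x)
      = ∑ m, f m * (∑ x, g x * hadamard n m x) := by
    refine Finset.sum_congr rfl fun m _ => ?_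
    rw [Finset.mul_sum]
    exact Finset.sum_congr rfl fun x _ => by ring
  rw [hstep]
  have hcs := Finset.sum_mul_sq_le_sq_mul_sq Finset.univ f
      (fun m => ∑ x, g x * hadamard n m x)
  refine le_trans hcs ?_
  have hkey : (∑ m, (∑ x, g x * hadamard n m x)^2) = 2^n * ∑ x, (g x)^2 := by
    have expand : ∀ m, (∑ x, g x * hadamard n m x)^2
        = ∑ x, ∑ x', g x * g x' * (hadamard n m x * hadamard n m x') := by
      intro m
      rw [sq, Finset.sum_mul_sum]
      exact Finset.sum_congr rfl fun x _ => Finset.sum_congr rfl fun x' _ => by ring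
    rw [Finset.sum_congr rfl fun m _ => expand m]
    rw [Finset.sum_comm]
    have swap : ∀ x, (∑ m, ∑ x', g x * g x' * (hadamard n m x * hadamard n m x'))
        = ∑ x', g x * g x' * (∑ m, hadamard n m (x + x')) := by
      intro x
      rw [Finset.sum_comm]
      refine Finset.sum_congr rfl fun x' _ => ?_
      rw [Finset.mul_sum]
      exact Finset.sum_congr rfl fun m _ => by rw [had_mul]
    rw [Finset.sum_congr rfl fun x _ => swap x]
    have inner : ∀ x : Fin n → ZMod 2, (∑ x', g x * g x' * (∑ m, hadamard n m (x + x')))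
        = 2^n * (g x)^2 := by
      intro x
      rw [Finset.sum_eq_single x]
      · have hxx : x + x = 0 := by
          funext j; exact CharTwo.add_self_eq_zero (x j)
        rw [hxx, char_sum_zero]; ring
      · intro x' _ hx'
        have hne : x + x' ≠ 0 := by
          intro h
          apply hx'
          funext j
          have hj := congrFun h j
          have h2 : ∀ a b : ZMod 2, a + b = 0 → b = a := by decide
          exact h2 _ _ hj
        rw [char_sum n (x + x') hne, mul_zero]
      · simp
    rw [Finset.sum_congr rfl fun x _ => inner x, ← Finset.mul_sum]
  rw [hkey]
  ring_nf
  exact le_refl _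

set_option maxHeartbeats 2000000 in
/-- Combinatorial impossibility lemma: no auxiliary variable `C` (with a ±1 output
`zout` determined by `C`) can simultaneously give good advantage, large average
min-entropy, and low conditional mutual information. -/
theorem stmt13 {Ω γty : Type*} [Fintype Ω] [Fintype γty] [DecidableEq γty] {n : ℕ}
    (μ : Ω → ℝ) (hμ : ∀ ω, 0 ≤ μ ω) (hsum : ∑ ω, μ ω = 1)
    (M X : Ω → (Fin n → ZMod 2)) (C : Ω → γty)
    (zout : γty → ℝ) (hz : ∀ c, zout c = 1 ∨ zout c = -1)
    (γ : ℝ) (hγ : 3 ≤ γ)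
    (hadv : (2 : ℝ) ^ (-γ + 2) ≤ ∑ c, pr μ C c *
        |(∑ ω ∈ Finset.univ.filter (fun ω => C ω = c),
            μ ω * hadamard n (M ω) (X ω) * zout c) / pr μ C c|)
    (hminent : (n : ℝ) + 2 * γ ≤ avgMinH μ M C + avgMinH μ X C)
    (hcmi : cmi μ M X C ≤ (2 : ℝ) ^ (-(2 * γ))) :
    False := by
  classical
  -- abbreviations
  set J : γty → (Fin n → ZMod 2) → (Fin n → ZMod 2) → ℝ :=
    fun c m x => pr μ (fun ω => ((M ω, X ω), C ω)) ((m, x), c) with hJdef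
  set PM : γty → (Fin n → ZMod 2) → ℝ :=
    fun c m => pr μ (fun ω => (M ω, C ω)) (m, c) with hPMdef
  set PX : γty → (Fin n → ZMod 2) → ℝ :=
    fun c x => pr μ (fun ω => (X ω, C ω)) (x, c) with hPXdef
  set w : γty → ℝ := fun c => pr μ C c with hwdef
  have hJnn : ∀ c m x, 0 ≤ J c m x := by
    intro c m x; simp only [hJdef]; unfold pr; exact Finset.sum_nonneg fun ω _ => hμ ω
  have hPMnn : ∀ c m, 0 ≤ PM c m := by
    intro c m; simp only [hPMdef]; unfold pr; exact Finset.sum_nonneg fun ω _ => hμ ω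
  have hPXnn : ∀ c x, 0 ≤ PX c x := by
    intro c x; simp only [hPXdef]; unfold pr; exact Finset.sum_nonneg fun ω _ => hμ ω
  have hwnn : ∀ c, 0 ≤ w c := by
    intro c; simp only [hwdef]; unfold pr; exact Finset.sum_nonneg fun ω _ => hμ ω
  -- marginalization identities
  have hPM_eq : ∀ c m, PM c m = ∑ x, J c m x := by
    intro c m
    simp only [hPMdef, hJdef]
    unfold pr
    calc ∑ ω ∈ Finset.univ.filter (fun ω => (M ω, C ω) = (m, c)), μ ω
        = ∑ ω ∈ Finset.univ.filter (fun ω => M ω = m ∧ C ω = c), μ ω :=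
          sum_filter_iff μ _ _ fun ω => by simp [Prod.ext_iff]
      _ = ∑ x, ∑ ω ∈ Finset.univ.filter (fun ω => (M ω = m ∧ C ω = c) ∧ X ω = x), μ ω :=
          pr_split μ _ X
      _ = ∑ x, ∑ ω ∈ Finset.univ.filter (fun ω => ((M ω, X ω), C ω) = ((m, x), c)), μ ω :=
          Finset.sum_congr rfl fun x _ =>
            sum_filter_iff μ _ _ fun ω => by simp [Prod.ext_iff]; tauto
  have hPX_eq : ∀ c x, PX c x = ∑ m, J c m x := by
    intro c x
    simp only [hPXdef, hJdef]
    unfold pr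
    calc ∑ ω ∈ Finset.univ.filter (fun ω => (X ω, C ω) = (x, c)), μ ω
        = ∑ ω ∈ Finset.univ.filter (fun ω => X ω = x ∧ C ω = c), μ ω :=
          sum_filter_iff μ _ _ fun ω => by simp [Prod.ext_iff]
      _ = ∑ m, ∑ ω ∈ Finset.univ.filter (fun ω => (X ω = x ∧ C ω = c) ∧ M ω = m), μ ω :=
          pr_split μ _ M
      _ = ∑ m, ∑ ω ∈ Finset.univ.filter (fun ω => ((M ω, X ω), C ω) = ((m, x), c)), μ ω :=
          Finset.sum_congr rfl fun m _ =>
            sum_filter_iff μ _ _ fun ω => by simp [Prod.ext_iff]; tauto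
  have hwM_eq : ∀ c, w c = ∑ m, PM c m := by
    intro c
    simp only [hwdef, hPMdef]
    unfold pr
    calc ∑ ω ∈ Finset.univ.filter (fun ω => C ω = c), μ ω
        = ∑ m, ∑ ω ∈ Finset.univ.filter (fun ω => C ω = c ∧ M ω = m), μ ω := pr_split μ _ M
      _ = ∑ m, ∑ ω ∈ Finset.univ.filter (fun ω => (M ω, C ω) = (m, c)), μ ω :=
          Finset.sum_congr rfl fun m _ =>
            sum_filter_iff μ _ _ fun ω => by simp [Prod.ext_iff]; tauto
  have hwX_eq : ∀ c, w c = ∑ x, PX c x := by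
    intro c
    simp only [hwdef, hPXdef]
    unfold pr
    calc ∑ ω ∈ Finset.univ.filter (fun ω => C ω = c), μ ω
        = ∑ x, ∑ ω ∈ Finset.univ.filter (fun ω => C ω = c ∧ X ω = x), μ ω := pr_split μ _ X
      _ = ∑ x, ∑ ω ∈ Finset.univ.filter (fun ω => (X ω, C ω) = (x, c)), μ ω :=
          Finset.sum_congr rfl fun x _ =>
            sum_filter_iff μ _ _ fun ω => by simp [Prod.ext_iff]; tauto
  have hw_sum : ∑ c, w c = 1 := by
    simp only [hwdef]
    unfold pr
    rw [Finset.sum_fiberwise Finset.univ C μ]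
    exact hsum
  have hJ_le_PM : ∀ c m x, J c m x ≤ PM c m := by
    intro c m x
    rw [hPM_eq]
    exact Finset.single_le_sum (fun x' _ => hJnn c m x') (mem_univ x)
  have hJ_le_PX : ∀ c m x, J c m x ≤ PX c x := by
    intro c m x
    rw [hPX_eq]
    exact Finset.single_le_sum (fun m' _ => hJnn c m' x) (mem_univ m)
  have hPM_le_w : ∀ c m, PM c m ≤ w c := by
    intro c m
    rw [hwM_eq]
    exact Finset.single_le_sum (fun m' _ => hPMnn c m') (mem_univ m)
  have hPX_le_w : ∀ c x, PX c x ≤ w c := by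
    intro c x
    rw [hwX_eq]
    exact Finset.single_le_sum (fun x' _ => hPXnn c x') (mem_univ x)
  -- sup quantities
  set a : γty → ℝ := fun c => Finset.univ.sup' Finset.univ_nonempty (fun m => PM c m) with hadef
  set b : γty → ℝ := fun c => Finset.univ.sup' Finset.univ_nonempty (fun x => PX c x) with hbdef
  have hPM_le_a : ∀ c m, PM c m ≤ a c := fun c m => Finset.le_sup' _ (mem_univ m)
  have hPX_le_b : ∀ c x, PX c x ≤ b c := fun c x => Finset.le_sup' _ (mem_univ x)
  have hann : ∀ c, 0 ≤ a c := by
    intro c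
    obtain ⟨m⟩ := (inferInstance : Nonempty (Fin n → ZMod 2))
    exact le_trans (hPMnn c m) (hPM_le_a c m)
  have hbnn : ∀ c, 0 ≤ b c := by
    intro c
    obtain ⟨x⟩ := (inferInstance : Nonempty (Fin n → ZMod 2))
    exact le_trans (hPXnn c x) (hPX_le_b c x)
  have hcard : (Fintype.card (Fin n → ZMod 2)) = 2^n := by
    simp [Fintype.card_fun]
  -- min-entropy consequences
  have hwa : ∀ c, w c ≤ (2:ℝ)^n * a c := by
    intro c
    rw [hwM_eq]
    calc ∑ m, PM c m ≤ ∑ _m : (Fin n → ZMod 2), a c :=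
          Finset.sum_le_sum fun m _ => hPM_le_a c m
      _ = (Fintype.card (Fin n → ZMod 2) : ℝ) * a c := by
          rw [Finset.sum_const, Finset.card_univ, nsmul_eq_mul]
      _ = (2:ℝ)^n * a c := by rw [hcard]; push_cast; ring
  have hwb : ∀ c, w c ≤ (2:ℝ)^n * b c := by
    intro c
    rw [hwX_eq]
    calc ∑ x, PX c x ≤ ∑ _x : (Fin n → ZMod 2), b c :=
          Finset.sum_le_sum fun x _ => hPX_le_b c x
      _ = (Fintype.card (Fin n → ZMod 2) : ℝ) * b c := by
          rw [Finset.sum_const, Finset.card_univ, nsmul_eq_mul]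
      _ = (2:ℝ)^n * b c := by rw [hcard]; push_cast; ring
  have hSapos : 0 < ∑ c, a c := by
    have h1 : (1:ℝ) ≤ (2:ℝ)^n * ∑ c, a c := by
      rw [← hw_sum, Finset.mul_sum]
      exact Finset.sum_le_sum fun c _ => hwa c
    nlinarith [pow_pos (by norm_num : (0:ℝ) < 2) n]
  have hSbpos : 0 < ∑ c, b c := by
    have h1 : (1:ℝ) ≤ (2:ℝ)^n * ∑ c, b c := by
      rw [← hw_sum, Finset.mul_sum]
      exact Finset.sum_le_sum fun c _ => hwb c
    nlinarith [pow_pos (by norm_num : (0:ℝ) < 2) n]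
  have hsupM : ∀ c, pr μ C c * Finset.univ.sup' Finset.univ_nonempty
      (fun m => pr μ (fun ω => (M ω, C ω)) (m, c) / pr μ C c) = a c := by
    intro c
    have hwc : pr μ C c = w c := by rw [hwdef]
    have hpm : ∀ m, pr μ (fun ω => (M ω, C ω)) (m, c) = PM c m := fun m => by rw [hPMdef]
    simp only [hwc, hpm]
    rcases (hwnn c).eq_or_lt with h0 | hpos
    · rw [← h0, zero_mul]
      have ha0 : a c ≤ 0 := by
        rw [hadef]
        exact Finset.sup'_le _ _ fun m _ => le_trans (hPM_le_w c m) (le_of_eq h0.symm)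
      linarith [hann c]
    · have hcomp : Finset.univ.sup' Finset.univ_nonempty (fun m => PM c m / w c)
          = a c / w c := by
        rw [hadef]
        exact (Finset.comp_sup'_eq_sup'_comp Finset.univ_nonempty (fun t => t / w c)
          (fun t t' => (max_div_div_right (le_of_lt hpos) t t').symm)).symm
      rw [hcomp]
      field_simp
  have hsupX : ∀ c, pr μ C c * Finset.univ.sup' Finset.univ_nonempty
      (fun x => pr μ (fun ω => (X ω, C ω)) (x, c) / pr μ C c) = b c := by
    intro c
    have hwc : pr μ C c = w c := by rw [hwdef]
    have hpx : ∀ x, pr μ (fun ω => (X ω, C ω)) (x, c) = PX c x := fun x => by rw [hPXdef]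
    simp only [hwc, hpx]
    rcases (hwnn c).eq_or_lt with h0 | hpos
    · rw [← h0, zero_mul]
      have hb0 : b c ≤ 0 := by
        rw [hbdef]
        exact Finset.sup'_le _ _ fun x _ => le_trans (hPX_le_w c x) (le_of_eq h0.symm)
      linarith [hbnn c]
    · have hcomp : Finset.univ.sup' Finset.univ_nonempty (fun x => PX c x / w c)
          = b c / w c := by
        rw [hbdef]
        exact (Finset.comp_sup'_eq_sup'_comp Finset.univ_nonempty (fun t => t / w c)
          (fun t t' => (max_div_div_right (le_of_lt hpos) t t').symm)).symm
      rw [hcomp]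
      field_simp
  have hAM : avgMinH μ M C = - Real.logb 2 (∑ c, a c) := by
    unfold avgMinH
    rw [Finset.sum_congr rfl fun c _ => hsupM c]
  have hAX : avgMinH μ X C = - Real.logb 2 (∑ c, b c) := by
    unfold avgMinH
    rw [Finset.sum_congr rfl fun c _ => hsupX c]
  have hprod : (∑ c, a c) * (∑ c, b c) ≤ (2:ℝ) ^ (-((n:ℝ) + 2*γ)) := by
    rw [hAM, hAX] at hminent
    have hlogmul : Real.logb 2 ((∑ c, a c) * (∑ c, b c))
        = Real.logb 2 (∑ c, a c) + Real.logb 2 (∑ c, b c) :=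
      Real.logb_mul (ne_of_gt hSapos) (ne_of_gt hSbpos)
    have h2 : (∑ c, a c) * (∑ c, b c)
        = (2:ℝ) ^ (Real.logb 2 ((∑ c, a c) * (∑ c, b c))) :=
      (Real.rpow_logb (by norm_num) (by norm_num) (mul_pos hSapos hSbpos)).symm
    rw [h2]
    apply Real.rpow_le_rpow_of_exponent_le (by norm_num)
    rw [hlogmul]
    linarith
  -- advantage rewrite
  have hJ_le_w : ∀ c m x, J c m x ≤ w c := fun c m x =>
    le_trans (hJ_le_PM c m x) (hPM_le_w c m)
  have hadv2 : (2:ℝ) ^ (-γ + 2) ≤ ∑ c, |∑ m, ∑ x, J c m x * hadamard n m x| := by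
    refine le_trans hadv (le_of_eq (Finset.sum_congr rfl fun c _ => ?_))
    have hwc : pr μ C c = w c := by rw [hwdef]
    rcases (hwnn c).eq_or_lt with h0 | hpos
    · have hJ0 : ∀ m x, J c m x = 0 := fun m x =>
        le_antisymm (le_trans (hJ_le_w c m x) h0.symm.le) (hJnn c m x)
      rw [hwc, ← h0, zero_mul]
      symm
      rw [abs_eq_zero]
      exact Finset.sum_eq_zero fun m _ => Finset.sum_eq_zero fun x _ => by
        rw [hJ0 m x, zero_mul]
    · have hN : (∑ ω ∈ Finset.univ.filter (fun ω => C ω = c),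
          μ ω * hadamard n (M ω) (X ω) * zout c)
          = zout c * ∑ m, ∑ x, J c m x * hadamard n m x := by
        rw [← Finset.sum_fiberwise (Finset.univ.filter (fun ω => C ω = c))
            (fun ω => (M ω, X ω)) (fun ω => μ ω * hadamard n (M ω) (X ω) * zout c)]
        have step : ∀ p : (Fin n → ZMod 2) × (Fin n → ZMod 2),
            (∑ ω ∈ (Finset.univ.filter (fun ω => C ω = c)).filter
              (fun ω => (M ω, X ω) = p), μ ω * hadamard n (M ω) (X ω) * zout c)
            = zout c * (J c p.1 p.2 * hadamard n p.1 p.2) := by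
          intro p
          have e1 : (∑ ω ∈ (Finset.univ.filter (fun ω => C ω = c)).filter
              (fun ω => (M ω, X ω) = p), μ ω * hadamard n (M ω) (X ω) * zout c)
              = ∑ ω ∈ (Finset.univ.filter (fun ω => C ω = c)).filter
                (fun ω => (M ω, X ω) = p), μ ω * hadamard n p.1 p.2 * zout c := by
            refine Finset.sum_congr rfl fun ω hω => ?_
            rw [Finset.mem_filter] at hω
            rw [← hω.2]
          rw [e1, ← Finset.sum_mul, ← Finset.sum_mul]
          have e2 : (∑ ω ∈ (Finset.univ.filter (fun ω => C ω = c)).filter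
              (fun ω => (M ω, X ω) = p), μ ω) = J c p.1 p.2 := by
            rw [Finset.filter_filter]
            simp only [hJdef]
            unfold pr
            exact sum_filter_iff μ _ _ fun ω => by
              constructor
              · rintro ⟨h1, h2⟩
                simp [Prod.ext_iff, h1, ← h2]
              · rintro h
                simp [Prod.ext_iff] at h
                exact ⟨h.2, by rw [h.1.1, h.1.2]⟩
          rw [e2]
          ring
        rw [Finset.sum_congr rfl fun p _ => step p, ← Finset.mul_sum]
        rw [Fintype.sum_prod_type]
      rw [hN, hwc]
      rw [abs_div, abs_mul, abs_of_pos hpos]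
      have hzabs : |zout c| = 1 := by rcases hz c with h | h <;> rw [h] <;> norm_num
      rw [hzabs, one_mul]
      field_simp
  -- product approximation
  set s : γty → (Fin n → ZMod 2) → (Fin n → ZMod 2) → ℝ :=
    fun c m x => PM c m * PX c x / w c with hsdef
  have hsnn : ∀ c m x, 0 ≤ s c m x := fun c m x =>
    div_nonneg (mul_nonneg (hPMnn c m) (hPXnn c x)) (hwnn c)
  have hs_sum : ∀ c, ∑ m, ∑ x, s c m x = w c := by
    intro c
    rcases (hwnn c).eq_or_lt with h0 | hpos
    · simp only [hsdef, ← h0, div_zero, Finset.sum_const_zero]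
    · simp only [hsdef]
      have e1 : ∑ m, ∑ x, PM c m * PX c x / w c
          = (∑ m, PM c m) * (∑ x, PX c x) / w c := by
        rw [Finset.sum_mul_sum, Finset.sum_div]
        exact Finset.sum_congr rfl fun m _ => (Finset.sum_div _ _ _).symm
      rw [e1, ← hwM_eq, ← hwX_eq]
      field_simp
  have hsplit : ∀ c, |∑ m, ∑ x, J c m x * hadamard n m x| ≤
      |∑ m, ∑ x, s c m x * hadamard n m x| + ∑ m, ∑ x, |J c m x - s c m x| := by
    intro c
    have h1 : |∑ m, ∑ x, J c m x * hadamard n m x| ≤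
        |∑ m, ∑ x, s c m x * hadamard n m x|
        + |(∑ m, ∑ x, J c m x * hadamard n m x) - ∑ m, ∑ x, s c m x * hadamard n m x| := by
      have := abs_add_le (∑ m, ∑ x, s c m x * hadamard n m x)
        ((∑ m, ∑ x, J c m x * hadamard n m x) - ∑ m, ∑ x, s c m x * hadamard n m x)
      simpa using this
    refine le_trans h1 (add_le_add_right ?_ _)
    rw [← Finset.sum_sub_distrib]
    refine le_trans (Finset.abs_sum_le_sum_abs _ _) (Finset.sum_le_sum fun m _ => ?_)
    rw [← Finset.sum_sub_distrib]
    refine le_trans (Finset.abs_sum_le_sum_abs _ _) (Finset.sum_le_sum fun x _ => ?_)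
    rw [← sub_mul, abs_mul, had_abs, mul_one]
  have hlind : ∀ c, |∑ m, ∑ x, s c m x * hadamard n m x| ≤
      Real.sqrt ((2:ℝ)^n * a c * b c) := by
    intro c
    rcases (hwnn c).eq_or_lt with h0 | hpos
    · have : ∀ m x, s c m x = 0 := by
        intro m x; simp only [hsdef, ← h0, div_zero]
      rw [Finset.sum_congr rfl fun m (_ : m ∈ Finset.univ) => Finset.sum_eq_zero
        fun x _ => by rw [this m x, zero_mul]]
      simp [Real.sqrt_nonneg]
    · have hnum : ∀ m x, s c m x * hadamard n m x
          = PM c m * PX c x * hadamard n m x / w c := by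
        intro m x
        simp only [hsdef]
        ring
      have e1 : ∑ m, ∑ x, s c m x * hadamard n m x
          = (∑ m, ∑ x, PM c m * PX c x * hadamard n m x) / w c := by
        rw [Finset.sum_div]
        exact Finset.sum_congr rfl fun m _ => by
          rw [Finset.sum_div]
          exact Finset.sum_congr rfl fun x _ => hnum m x
      have hS1 : ∑ m, (PM c m)^2 ≤ a c * w c := by
        rw [hwM_eq, Finset.mul_sum]
        refine Finset.sum_le_sum fun m _ => ?_
        rw [sq]
        exact mul_le_mul_of_nonneg_right (hPM_le_a c m) (hPMnn c m)
      have hS2 : ∑ x, (PX c x)^2 ≤ b c * w c := by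
        rw [hwX_eq, Finset.mul_sum]
        refine Finset.sum_le_sum fun x _ => ?_
        rw [sq]
        exact mul_le_mul_of_nonneg_right (hPX_le_b c x) (hPXnn c x)
      have hnum2 : (∑ m, ∑ x, PM c m * PX c x * hadamard n m x)^2
          ≤ ((2:ℝ)^n * a c * b c) * (w c)^2 := by
        refine le_trans (lindsey n (PM c) (PX c)) ?_
        have hp : (0:ℝ) < 2^n := by positivity
        have hs1nn : (0:ℝ) ≤ ∑ m, (PM c m)^2 :=
          Finset.sum_nonneg fun m _ => sq_nonneg _
        have hs2nn : (0:ℝ) ≤ ∑ x, (PX c x)^2 :=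
          Finset.sum_nonneg fun x _ => sq_nonneg _
        have hawnn : (0:ℝ) ≤ a c * w c := mul_nonneg (hann c) (hwnn c)
        nlinarith [mul_le_mul hS1 hS2 hs2nn hawnn]
      have habs : |∑ m, ∑ x, PM c m * PX c x * hadamard n m x|
          ≤ Real.sqrt (((2:ℝ)^n * a c * b c) * (w c)^2) := by
        rw [← Real.sqrt_sq_eq_abs]
        exact Real.sqrt_le_sqrt hnum2
      have hsq : Real.sqrt (((2:ℝ)^n * a c * b c) * (w c)^2)
          = Real.sqrt ((2:ℝ)^n * a c * b c) * w c := by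
        rw [Real.sqrt_mul (mul_nonneg (mul_nonneg (by positivity) (hann c)) (hbnn c)),
          Real.sqrt_sq (hwnn c)]
      rw [e1, abs_div, abs_of_pos hpos, div_le_iff₀ hpos]
      rw [hsq] at habs
      exact habs
  have hlindsum : ∑ c, Real.sqrt ((2:ℝ)^n * a c * b c) ≤ (2:ℝ) ^ (-γ) := by
    have e1 : ∀ c, Real.sqrt ((2:ℝ)^n * a c * b c)
        = Real.sqrt ((2:ℝ)^n * a c) * Real.sqrt (b c) := fun c => by
      rw [Real.sqrt_mul (mul_nonneg (by positivity) (hann c))]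
    rw [Finset.sum_congr rfl fun c _ => e1 c]
    refine le_trans (Real.sum_sqrt_mul_sqrt_le Finset.univ
      (f := fun c => (2:ℝ)^n * a c) (g := b)
      (fun c => mul_nonneg (by positivity) (hann c)) hbnn) ?_
    have e2 : ∑ c, (2:ℝ)^n * a c = (2:ℝ)^n * ∑ c, a c := by rw [Finset.mul_sum]
    rw [e2, ← Real.sqrt_mul (mul_nonneg (by positivity) (le_of_lt hSapos))]
    have e3 : (2:ℝ)^n * (∑ c, a c) * (∑ c, b c) ≤ (2:ℝ)^n * ((2:ℝ) ^ (-((n:ℝ) + 2*γ))) := by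
      rw [mul_assoc]
      exact mul_le_mul_of_nonneg_left hprod (by positivity)
    have e4 : (2:ℝ)^n * ((2:ℝ) ^ (-((n:ℝ) + 2*γ))) = (2:ℝ) ^ (-(2*γ)) := by
      rw [← Real.rpow_natCast (2:ℝ) n, ← Real.rpow_add (by norm_num : (0:ℝ) < 2)]
      congr 1
      ring
    have e5 : (2:ℝ) ^ (-(2*γ)) = ((2:ℝ) ^ (-γ))^2 := by
      rw [← Real.rpow_natCast ((2:ℝ)^(-γ)) 2, ← Real.rpow_mul (by norm_num : (0:ℝ) ≤ 2)]
      congr 1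
      push_cast
      ring
    refine le_trans (Real.sqrt_le_sqrt (le_trans e3 (le_of_eq e4))) ?_
    rw [e5, Real.sqrt_sq (le_of_lt (Real.rpow_pos_of_pos (by norm_num) _))]
  -- KL quantities
  set D : γty → ℝ :=
    fun c => ∑ m, ∑ x, J c m x * Real.log (J c m x * w c / (PM c m * PX c x)) with hDdef
  have hJw : ∀ c, ∑ m, ∑ x, J c m x = w c := by
    intro c
    rw [hwM_eq]
    exact Finset.sum_congr rfl fun m _ => (hPM_eq c m).symm
  have hptJ : ∀ c m x, (J c m x - s c m x)^2 / (2 * max (J c m x) (s c m x)) ≤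
      J c m x * Real.log (J c m x * w c / (PM c m * PX c x)) - J c m x + s c m x := by
    intro c m x
    rcases (hJnn c m x).eq_or_lt with h0 | hJpos
    · have hpt := ptwise (le_refl (0:ℝ)) (hsnn c m x)
        (by intro h; exact absurd h (lt_irrefl 0))
      rw [← h0]
      simpa using hpt
    · have hPMpos : 0 < PM c m := lt_of_lt_of_le hJpos (hJ_le_PM c m x)
      have hPXpos : 0 < PX c x := lt_of_lt_of_le hJpos (hJ_le_PX c m x)
      have hwpos : 0 < w c := lt_of_lt_of_le hPMpos (hPM_le_w c m)
      have hspos : 0 < s c m x := by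
        simp only [hsdef]; positivity
      have harg : J c m x * w c / (PM c m * PX c x) = J c m x / s c m x := by
        simp only [hsdef]
        rw [div_div_eq_mul_div]
      rw [harg]
      exact ptwise (hJnn c m x) (hsnn c m x) (fun _ => hspos)
  have hDsplit : ∀ c, ∑ m, ∑ x,
      (J c m x * Real.log (J c m x * w c / (PM c m * PX c x)) - J c m x + s c m x)
      = D c := by
    intro c
    simp only [Finset.sum_add_distrib, Finset.sum_sub_distrib]
    rw [hJw c, hs_sum c]
    simp only [hDdef]
    ring
  have hptsum : ∀ c, ∑ m, ∑ x,
      (J c m x - s c m x)^2 / (2 * max (J c m x) (s c m x)) ≤ D c := by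
    intro c
    rw [← hDsplit c]
    exact Finset.sum_le_sum fun m _ => Finset.sum_le_sum fun x _ => hptJ c m x
  have hmaxnn : ∀ c m x, (0:ℝ) ≤ 2 * max (J c m x) (s c m x) := fun c m x =>
    mul_nonneg (by norm_num) (le_trans (hJnn c m x) (le_max_left _ _))
  have hDnn : ∀ c, 0 ≤ D c := by
    intro c
    refine le_trans ?_ (hptsum c)
    refine Finset.sum_nonneg fun m _ => Finset.sum_nonneg fun x _ => ?_
    exact div_nonneg (sq_nonneg _) (hmaxnn c m x)
  have hl1 : ∀ c, ∑ m, ∑ x, |J c m x - s c m x| ≤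
      2 * (Real.sqrt (w c) * Real.sqrt (D c)) := by
    intro c
    have hpoint : ∀ m x, |J c m x - s c m x|
        = Real.sqrt ((J c m x - s c m x)^2 / (2 * max (J c m x) (s c m x)))
          * Real.sqrt (2 * max (J c m x) (s c m x)) := by
      intro m x
      rcases eq_or_lt_of_le (le_max_of_le_left (hJnn c m x) :
          (0:ℝ) ≤ max (J c m x) (s c m x)) with hmax0 | hmaxpos
      · have hJ0 : J c m x = 0 :=
          le_antisymm (le_trans (le_max_left _ _) hmax0.symm.le) (hJnn c m x)
        have hs0 : s c m x = 0 :=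
          le_antisymm (le_trans (le_max_right _ _) hmax0.symm.le) (hsnn c m x)
        rw [hJ0, hs0]
        simp
      · have h2max : (0:ℝ) < 2 * max (J c m x) (s c m x) := by linarith
        rw [← Real.sqrt_mul (div_nonneg (sq_nonneg _) h2max.le)]
        rw [div_mul_cancel₀ _ (ne_of_gt h2max)]
        rw [Real.sqrt_sq_eq_abs]
    rw [Finset.sum_congr rfl fun m _ => Finset.sum_congr rfl fun x _ => hpoint m x]
    have hflat : (∑ p : ((Fin n → ZMod 2) × (Fin n → ZMod 2)),
        Real.sqrt ((J c p.1 p.2 - s c p.1 p.2)^2 / (2 * max (J c p.1 p.2) (s c p.1 p.2)))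
          * Real.sqrt (2 * max (J c p.1 p.2) (s c p.1 p.2)))
        = ∑ m, ∑ x, Real.sqrt ((J c m x - s c m x)^2 / (2 * max (J c m x) (s c m x)))
          * Real.sqrt (2 * max (J c m x) (s c m x)) := by
      rw [Fintype.sum_prod_type]
    rw [← hflat]
    refine le_trans (Real.sum_sqrt_mul_sqrt_le Finset.univ
      (f := fun p : ((Fin n → ZMod 2) × (Fin n → ZMod 2)) =>
        (J c p.1 p.2 - s c p.1 p.2)^2 / (2 * max (J c p.1 p.2) (s c p.1 p.2)))
      (g := fun p => 2 * max (J c p.1 p.2) (s c p.1 p.2))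
      (fun p => div_nonneg (sq_nonneg _) (hmaxnn c p.1 p.2))
      (fun p => hmaxnn c p.1 p.2)) ?_
    have hf : ∑ p : ((Fin n → ZMod 2) × (Fin n → ZMod 2)),
        (J c p.1 p.2 - s c p.1 p.2)^2 / (2 * max (J c p.1 p.2) (s c p.1 p.2)) ≤ D c := by
      rw [Fintype.sum_prod_type]
      exact hptsum c
    have hg : ∑ p : ((Fin n → ZMod 2) × (Fin n → ZMod 2)),
        2 * max (J c p.1 p.2) (s c p.1 p.2) ≤ 4 * w c := by
      have : ∀ p : ((Fin n → ZMod 2) × (Fin n → ZMod 2)),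
          2 * max (J c p.1 p.2) (s c p.1 p.2) ≤ 2 * (J c p.1 p.2 + s c p.1 p.2) := by
        intro p
        have := max_le_add_of_nonneg (hJnn c p.1 p.2) (hsnn c p.1 p.2)
        linarith
      refine le_trans (Finset.sum_le_sum fun p _ => this p) ?_
      rw [← Finset.mul_sum, Fintype.sum_prod_type]
      simp only [Finset.sum_add_distrib]
      rw [hJw c, hs_sum c]
      linarith [hwnn c]
    calc Real.sqrt (∑ p : ((Fin n → ZMod 2) × (Fin n → ZMod 2)),
          (J c p.1 p.2 - s c p.1 p.2)^2 / (2 * max (J c p.1 p.2) (s c p.1 p.2)))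
          * Real.sqrt (∑ p : ((Fin n → ZMod 2) × (Fin n → ZMod 2)),
            2 * max (J c p.1 p.2) (s c p.1 p.2))
        ≤ Real.sqrt (D c) * Real.sqrt (4 * w c) := by
          apply mul_le_mul (Real.sqrt_le_sqrt hf) (Real.sqrt_le_sqrt hg)
            (Real.sqrt_nonneg _) (Real.sqrt_nonneg _)
      _ = 2 * (Real.sqrt (w c) * Real.sqrt (D c)) := by
          rw [show (4:ℝ) * w c = 2^2 * w c by norm_num,
            Real.sqrt_mul (by norm_num : (0:ℝ) ≤ 2^2),
            Real.sqrt_sq (by norm_num : (0:ℝ) ≤ 2)]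
          ring
  have T1 : ent μ (fun ω => (M ω, C ω)) = -∑ c, ∑ m, ∑ x, J c m x * Real.logb 2 (PM c m) := by
    unfold ent
    congr 1
    rw [Fintype.sum_prod_type, Finset.sum_comm]
    refine Finset.sum_congr rfl fun c _ => Finset.sum_congr rfl fun m _ => ?_
    have hpm : pr μ (fun ω => (M ω, C ω)) (m, c) = PM c m := by rw [hPMdef]
    rw [hpm, ← Finset.sum_mul, ← hPM_eq c m]
  have T2 : ent μ (fun ω => (X ω, C ω)) = -∑ c, ∑ m, ∑ x, J c m x * Real.logb 2 (PX c x) := by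
    unfold ent
    congr 1
    rw [Fintype.sum_prod_type, Finset.sum_comm]
    refine Finset.sum_congr rfl fun c _ => ?_
    rw [Finset.sum_comm]
    refine Finset.sum_congr rfl fun x _ => ?_
    have hpx : pr μ (fun ω => (X ω, C ω)) (x, c) = PX c x := by rw [hPXdef]
    rw [hpx, ← Finset.sum_mul, ← hPX_eq c x]
  have T3 : ent μ (fun ω => ((M ω, X ω), C ω))
      = -∑ c, ∑ m, ∑ x, J c m x * Real.logb 2 (J c m x) := by
    unfold ent
    congr 1
    rw [Fintype.sum_prod_type, Finset.sum_comm]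
    refine Finset.sum_congr rfl fun c _ => ?_
    rw [Fintype.sum_prod_type]
  have T4 : ent μ C = -∑ c, ∑ m, ∑ x, J c m x * Real.logb 2 (w c) := by
    unfold ent
    congr 1
    refine Finset.sum_congr rfl fun c _ => ?_
    have hwc : pr μ C c = w c := by rw [hwdef]
    have e : ∑ m, ∑ x, J c m x * Real.logb 2 (w c)
        = (∑ m, ∑ x, J c m x) * Real.logb 2 (w c) := by
      rw [Finset.sum_mul]
      exact Finset.sum_congr rfl fun m _ => by rw [Finset.sum_mul]
    rw [hwc, e, hJw c]
  have hcmi_logb : cmi μ M X C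
      = ∑ c, ∑ m, ∑ x, J c m x * Real.logb 2 (J c m x * w c / (PM c m * PX c x)) := by
    unfold cmi
    rw [T1, T2, T3, T4]
    have point : ∀ c m x, J c m x * Real.logb 2 (J c m x * w c / (PM c m * PX c x))
        = J c m x * Real.logb 2 (J c m x) + J c m x * Real.logb 2 (w c)
          - J c m x * Real.logb 2 (PM c m) - J c m x * Real.logb 2 (PX c x) := by
      intro c m x
      rcases (hJnn c m x).eq_or_lt with h0 | hJpos
      · rw [← h0]; ring
      · have hPMpos : 0 < PM c m := lt_of_lt_of_le hJpos (hJ_le_PM c m x)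
        have hPXpos : 0 < PX c x := lt_of_lt_of_le hJpos (hJ_le_PX c m x)
        have hwpos : 0 < w c := lt_of_lt_of_le hPMpos (hPM_le_w c m)
        rw [Real.logb_div (by positivity) (by positivity),
          Real.logb_mul (ne_of_gt hJpos) (ne_of_gt hwpos),
          Real.logb_mul (ne_of_gt hPMpos) (ne_of_gt hPXpos)]
        ring
    rw [Finset.sum_congr rfl fun c _ => Finset.sum_congr rfl fun m _ =>
      Finset.sum_congr rfl fun x _ => point c m x]
    simp only [Finset.sum_add_distrib, Finset.sum_sub_distrib]
    ring
  have hcmi_eq : cmi μ M X C = (∑ c, D c) / Real.log 2 := by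
    rw [hcmi_logb]
    simp only [hDdef]
    rw [Finset.sum_div]
    refine Finset.sum_congr rfl fun c _ => ?_
    rw [Finset.sum_div]
    refine Finset.sum_congr rfl fun m _ => ?_
    rw [Finset.sum_div]
    refine Finset.sum_congr rfl fun x _ => ?_
    rw [Real.logb]
    ring
  have hDsum : ∑ c, D c ≤ (2:ℝ) ^ (-(2*γ)) := by
    rw [hcmi_eq] at hcmi
    have hlog2pos : 0 < Real.log 2 := Real.log_pos (by norm_num)
    have hlog2le : Real.log 2 ≤ 1 := by
      have := Real.log_le_sub_one_of_pos (by norm_num : (0:ℝ) < 2)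
      linarith
    rw [div_le_iff₀ hlog2pos] at hcmi
    have hpow_nn : (0:ℝ) ≤ (2:ℝ) ^ (-(2*γ)) :=
      le_of_lt (Real.rpow_pos_of_pos (by norm_num) _)
    nlinarith
  have hsqrtD : Real.sqrt (∑ c, D c) ≤ (2:ℝ) ^ (-γ) := by
    refine le_trans (Real.sqrt_le_sqrt hDsum) ?_
    have e5 : (2:ℝ) ^ (-(2*γ)) = ((2:ℝ) ^ (-γ))^2 := by
      rw [← Real.rpow_natCast ((2:ℝ)^(-γ)) 2, ← Real.rpow_mul (by norm_num : (0:ℝ) ≤ 2)]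
      congr 1
      push_cast
      ring
    rw [e5, Real.sqrt_sq (le_of_lt (Real.rpow_pos_of_pos (by norm_num) _))]
  have hpinsksum : ∑ c, (∑ m, ∑ x, |J c m x - s c m x|) ≤ 2 * (2:ℝ) ^ (-γ) := by
    calc ∑ c, (∑ m, ∑ x, |J c m x - s c m x|)
        ≤ ∑ c, 2 * (Real.sqrt (w c) * Real.sqrt (D c)) :=
          Finset.sum_le_sum fun c _ => hl1 c
      _ = 2 * ∑ c, Real.sqrt (w c) * Real.sqrt (D c) := by rw [Finset.mul_sum]
      _ ≤ 2 * (Real.sqrt (∑ c, w c) * Real.sqrt (∑ c, D c)) := by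
          refine mul_le_mul_of_nonneg_left
            (Real.sum_sqrt_mul_sqrt_le Finset.univ hwnn hDnn) (by norm_num)
      _ = 2 * Real.sqrt (∑ c, D c) := by rw [hw_sum, Real.sqrt_one, one_mul]
      _ ≤ 2 * (2:ℝ) ^ (-γ) := by linarith [hsqrtD]
  -- final contradiction
  have hchain : (2:ℝ) ^ (-γ + 2) ≤ (2:ℝ)^(-γ) + 2 * (2:ℝ)^(-γ) := by
    calc (2:ℝ) ^ (-γ + 2) ≤ ∑ c, |∑ m, ∑ x, J c m x * hadamard n m x| := hadv2
    _ ≤ ∑ c, (|∑ m, ∑ x, s c m x * hadamard n m x| + ∑ m, ∑ x, |J c m x - s c m x|) :=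
        Finset.sum_le_sum fun c _ => hsplit c
    _ = (∑ c, |∑ m, ∑ x, s c m x * hadamard n m x|)
        + ∑ c, (∑ m, ∑ x, |J c m x - s c m x|) := Finset.sum_add_distrib
    _ ≤ (∑ c, Real.sqrt ((2:ℝ)^n * a c * b c)) + 2 * (2:ℝ) ^ (-γ) :=
        add_le_add (Finset.sum_le_sum fun c _ => hlind c) hpinsksum
    _ ≤ (2:ℝ)^(-γ) + 2 * (2:ℝ)^(-γ) := add_le_add_left hlindsum _
  have hpow : (2:ℝ) ^ (-γ + 2) = 4 * (2:ℝ) ^ (-γ) := by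
    rw [Real.rpow_add (by norm_num : (0:ℝ) < 2)]
    norm_num [mul_comm]
  have hpos : 0 < (2:ℝ) ^ (-γ) := Real.rpow_pos_of_pos (by norm_num) _
  rw [hpow] at hchain
  linarith
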